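/- Let Ω = [0,1] with Lebesgue measure, and F_1 = {∅, [0,1/2), [1/2,1], Ω}. Let Z_1(ω) = 2ω, Z_2(ω) = 1 − ω, and let agents use CVaR risk sets D_i = {Y : 0 ≤ Y ≤ 1/β_i, E[Y]=1} with 2β_1 + β_2 > 1/2 and max(β_1, β_2) ≤ 1/2. Then the densities Y_1 = (1/β_1)(1_{[1/2−β_1 u, 1/2)} + 1_{[1−β_1(1−u), 1]}) and Y_2 = (1/β_2)(1_{[0, β_2 u)} + 1_{[1/2, 1/2+β_2(1−u)]}) with u = 1/2 − 1/(4(2β_1+β_2)) satisfy: Y_i ∈ D_i, E[Y_1 | F_1] = E[Y_2 | F_1], and the common conditional expectation equals 1 − 1/(2(2β_1+β_2)) on [0,1/2) and 1 + 1/(2(2β_1+β_2)) on [1/2,1]. -/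

import Mathlib

open MeasureTheory

private lemma aux_ind_integral (t s : Set ℝ) (ht : MeasurableSet t) :
    ∫ x in s, t.indicator (fun _ => (1:ℝ)) x ∂(volume : Measure ℝ)
      = (volume (s ∩ t)).toReal := by
  rw [setIntegral_indicator ht, setIntegral_const, smul_eq_mul, mul_one, measureReal_def]

private lemma aux_ind_integrable (t : Set ℝ) (ht : MeasurableSet t) (hfin : volume t < ⊤) :
    Integrable (t.indicator (fun _ => (1:ℝ))) (volume : Measure ℝ) := by
  rw [integrable_indicator_iff ht]
  exact integrableOn_const hfin.ne

private lemma aux_dich_single {α : Type*} {C : Set (Set α)} (X : Set α)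
    (hC : ∀ t ∈ C, Disjoint t X ∨ X ⊆ t) {s : Set α}
    (hs : MeasurableSet[MeasurableSpace.generateFrom C] s) :
    Disjoint s X ∨ X ⊆ s := by
  refine MeasurableSpace.generateFrom_induction C
    (fun t _ => Disjoint t X ∨ X ⊆ t) (fun t ht _ => hC t ht)
    (Or.inl (Set.disjoint_left.mpr (by intro x hx _; exact (Set.notMem_empty x hx)))) ?_ ?_ s hs
  · rintro t _ (h | h)
    · exact Or.inr (Set.subset_compl_iff_disjoint_left.mpr h)
    · refine Or.inl (Set.disjoint_left.mpr ?_)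
      intro x hx hxX
      exact hx (h hxX)
  · rintro f hf h
    by_cases hex : ∃ n, X ⊆ f n
    · obtain ⟨n, hn⟩ := hex
      exact Or.inr (hn.trans (Set.subset_iUnion f n))
    · push_neg at hex
      refine Or.inl (Set.disjoint_left.mpr ?_)
      intro x hx hxX
      obtain ⟨n, hxn⟩ := Set.mem_iUnion.mp hx
      rcases h n with hd | hsub
      · exact Set.disjoint_left.mp hd hxn hxX
      · exact hex n hsub

set_option maxHeartbeats 1000000 in
theorem two_agent_interval_example
    (β₁ β₂ : ℝ) (hβ₁ : β₁ ∈ Set.Ioc (0 : ℝ) 1) (hβ₂ : β₂ ∈ Set.Ioc (0 : ℝ) 1)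
    (hlow : 1 / 2 < 2 * β₁ + β₂) (hhigh : max β₁ β₂ ≤ 1 / 2)
    (μ : Measure ℝ) (hμ : μ = volume.restrict (Set.Icc (0 : ℝ) 1))
    (G : MeasurableSpace ℝ)
    (hGdef : G = MeasurableSpace.generateFrom
      {Set.Ico (0 : ℝ) (1 / 2), Set.Icc (1 / 2 : ℝ) 1})
    (u : ℝ) (hu : u = 1 / 2 - 1 / (4 * (2 * β₁ + β₂)))
    (Y₁ Y₂ : ℝ → ℝ)
    (hY₁def : Y₁ = fun ω => (1 / β₁) *
      ((Set.Ico (1 / 2 - β₁ * u) (1 / 2 : ℝ)).indicator (fun _ => (1 : ℝ)) ω +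
       (Set.Icc (1 - β₁ * (1 - u)) (1 : ℝ)).indicator (fun _ => (1 : ℝ)) ω))
    (hY₂def : Y₂ = fun ω => (1 / β₂) *
      ((Set.Ico (0 : ℝ) (β₂ * u)).indicator (fun _ => (1 : ℝ)) ω +
       (Set.Icc (1 / 2 : ℝ) (1 / 2 + β₂ * (1 - u))).indicator (fun _ => (1 : ℝ)) ω)) :
    (0 ≤ᵐ[μ] Y₁ ∧ (Y₁ ≤ᵐ[μ] fun _ => 1 / β₁) ∧ ∫ ω, Y₁ ω ∂μ = 1) ∧
    (0 ≤ᵐ[μ] Y₂ ∧ (Y₂ ≤ᵐ[μ] fun _ => 1 / β₂) ∧ ∫ ω, Y₂ ω ∂μ = 1) ∧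
    μ[Y₁|G] =ᵐ[μ] μ[Y₂|G] ∧
    μ[Y₁|G] =ᵐ[μ] fun ω =>
      if ω ∈ Set.Ico (0 : ℝ) (1 / 2) then 1 - 1 / (2 * (2 * β₁ + β₂))
      else 1 + 1 / (2 * (2 * β₁ + β₂)) := by
  subst hGdef
  obtain ⟨hβ₁0, hβ₁1⟩ := hβ₁
  obtain ⟨hβ₂0, hβ₂1⟩ := hβ₂
  have hβ₁h : β₁ ≤ 1/2 := le_trans (le_max_left _ _) hhigh
  have hβ₂h : β₂ ≤ 1/2 := le_trans (le_max_right _ _) hhigh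
  have hSpos : (0:ℝ) < 2*β₁+β₂ := by linarith
  have hSne : (2*β₁+β₂ : ℝ) ≠ 0 := ne_of_gt hSpos
  have htpos : (0:ℝ) < 1/(4*(2*β₁+β₂)) := by positivity
  have htlt : 1/(4*(2*β₁+β₂)) < 1/2 := by
    rw [div_lt_div_iff₀ (by positivity) (by norm_num)]
    linarith
  have hu0 : 0 < u := by rw [hu]; linarith
  have hu2 : u < 1/2 := by rw [hu]; linarith
  have hp : 1 - 1/(2*(2*β₁+β₂)) = 2*u := by
    rw [hu]; field_simp; ring
  have hq : 1 + 1/(2*(2*β₁+β₂)) = 2 - 2*u := by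
    rw [hu]; field_simp; ring
  -- interval bounds
  have hb1 : β₁ * u ≤ 1/2 := by nlinarith
  have hb2 : (1:ℝ)/2 ≤ 1 - β₁*(1-u) := by nlinarith
  have hb3 : β₂ * u ≤ 1/2 := by nlinarith
  have hb4 : 1/2 + β₂*(1-u) ≤ 1 := by nlinarith
  have hAmeas : MeasurableSet[Real.measurableSpace] (Set.Ico (0:ℝ) (1/2)) := measurableSet_Ico
  have hBmeas : MeasurableSet[Real.measurableSpace] (Set.Icc (1/2:ℝ) 1) := measurableSet_Icc
  have hABunion : Set.Ico (0:ℝ) (1/2) ∪ Set.Icc (1/2:ℝ) 1 = Set.Icc (0:ℝ) 1 :=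
    Set.Ico_union_Icc_eq_Icc (by norm_num) (by norm_num)
  have hABdisj : Disjoint (Set.Ico (0:ℝ) (1/2)) (Set.Icc (1/2:ℝ) 1) := by
    refine Set.disjoint_left.mpr ?_
    intro x hx1 hx2
    exact absurd hx2.1 (not_le.mpr hx1.2)
  have hGle : MeasurableSpace.generateFrom {Set.Ico (0:ℝ) (1/2), Set.Icc (1/2:ℝ) 1} ≤ Real.measurableSpace := by
    apply MeasurableSpace.generateFrom_le
    intro t ht
    simp only [Set.mem_insert_iff, Set.mem_singleton_iff] at ht
    rcases ht with rfl | rfl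
    · exact hAmeas
    · exact hBmeas
  haveI hfinμ : IsFiniteMeasure μ := by
    constructor
    rw [hμ, Measure.restrict_apply_univ, Real.volume_Icc]
    exact ENNReal.ofReal_lt_top
  haveI : SigmaFinite (μ.trim hGle) := inferInstance
  -- dichotomy for G-measurable sets
  have hdich : ∀ s : Set ℝ, MeasurableSet[MeasurableSpace.generateFrom {Set.Ico (0:ℝ) (1/2), Set.Icc (1/2:ℝ) 1}] s →
      (Disjoint s (Set.Ico (0:ℝ) (1/2)) ∨ Set.Ico (0:ℝ) (1/2) ⊆ s) ∧
      (Disjoint s (Set.Icc (1/2:ℝ) 1) ∨ Set.Icc (1/2:ℝ) 1 ⊆ s) := by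
    intro s hs
    constructor
    · refine aux_dich_single _ ?_ hs
      intro t ht
      simp only [Set.mem_insert_iff, Set.mem_singleton_iff] at ht
      rcases ht with rfl | rfl
      · exact Or.inr subset_rfl
      · exact Or.inl hABdisj.symm
    · refine aux_dich_single _ ?_ hs
      intro t ht
      simp only [Set.mem_insert_iff, Set.mem_singleton_iff] at ht
      rcases ht with rfl | rfl
      · exact Or.inl hABdisj
      · exact Or.inr subset_rfl
  -- integrability facts
  have hI₁meas : MeasurableSet[Real.measurableSpace] (Set.Ico (1/2 - β₁*u) (1/2:ℝ)) := measurableSet_Ico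
  have hI₂meas : MeasurableSet[Real.measurableSpace] (Set.Icc (1 - β₁*(1-u)) (1:ℝ)) := measurableSet_Icc
  have hJ₁meas : MeasurableSet[Real.measurableSpace] (Set.Ico (0:ℝ) (β₂*u)) := measurableSet_Ico
  have hJ₂meas : MeasurableSet[Real.measurableSpace] (Set.Icc (1/2:ℝ) (1/2 + β₂*(1-u))) := measurableSet_Icc
  have int_i1 : Integrable ((Set.Ico (1/2 - β₁*u) (1/2:ℝ)).indicator (fun _ => (1:ℝ))) volume :=
    aux_ind_integrable _ hI₁meas (by rw [Real.volume_Ico]; exact ENNReal.ofReal_lt_top)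
  have int_i2 : Integrable ((Set.Icc (1 - β₁*(1-u)) (1:ℝ)).indicator (fun _ => (1:ℝ))) volume :=
    aux_ind_integrable _ hI₂meas (by rw [Real.volume_Icc]; exact ENNReal.ofReal_lt_top)
  have int_j1 : Integrable ((Set.Ico (0:ℝ) (β₂*u)).indicator (fun _ => (1:ℝ))) volume :=
    aux_ind_integrable _ hJ₁meas (by rw [Real.volume_Ico]; exact ENNReal.ofReal_lt_top)
  have int_j2 : Integrable ((Set.Icc (1/2:ℝ) (1/2 + β₂*(1-u))).indicator (fun _ => (1:ℝ))) volume :=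
    aux_ind_integrable _ hJ₂meas (by rw [Real.volume_Icc]; exact ENNReal.ofReal_lt_top)
  have intY₁vol : Integrable Y₁ volume := by
    rw [hY₁def]; exact (int_i1.add int_i2).const_mul _
  have intY₂vol : Integrable Y₂ volume := by
    rw [hY₂def]; exact (int_j1.add int_j2).const_mul _
  have intY₁ : Integrable Y₁ μ := by rw [hμ]; exact intY₁vol.restrict
  have intY₂ : Integrable Y₂ μ := by rw [hμ]; exact intY₂vol.restrict
  -- integrals of Y₁, Y₂ over the two halves
  have hY₁A : ∫ x in Set.Ico (0:ℝ) (1/2), Y₁ x ∂volume = u := by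
    rw [hY₁def, integral_const_mul,
      integral_add int_i1.integrableOn int_i2.integrableOn,
      aux_ind_integral _ _ hI₁meas, aux_ind_integral _ _ hI₂meas]
    have e1 : Set.Ico (0:ℝ) (1/2) ∩ Set.Ico (1/2 - β₁*u) (1/2:ℝ)
        = Set.Ico (1/2 - β₁*u) (1/2:ℝ) :=
      Set.inter_eq_right.mpr (Set.Ico_subset_Ico (by linarith) le_rfl)
    have e2 : Set.Ico (0:ℝ) (1/2) ∩ Set.Icc (1 - β₁*(1-u)) (1:ℝ) = ∅ := by
      refine Set.eq_empty_iff_forall_notMem.mpr ?_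
      rintro x ⟨⟨_, h2⟩, h3, _⟩
      linarith
    rw [e1, e2, Real.volume_Ico, measure_empty, ENNReal.toReal_zero]
    have e3 : (1:ℝ)/2 - (1/2 - β₁*u) = β₁*u := by ring
    rw [e3, ENNReal.toReal_ofReal (mul_nonneg hβ₁0.le hu0.le)]
    field_simp
    ring
  have hY₁B : ∫ x in Set.Icc (1/2:ℝ) 1, Y₁ x ∂volume = 1 - u := by
    rw [hY₁def, integral_const_mul,
      integral_add int_i1.integrableOn int_i2.integrableOn,
      aux_ind_integral _ _ hI₁meas, aux_ind_integral _ _ hI₂meas]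
    have e1 : Set.Icc (1/2:ℝ) 1 ∩ Set.Ico (1/2 - β₁*u) (1/2:ℝ) = ∅ := by
      refine Set.eq_empty_iff_forall_notMem.mpr ?_
      rintro x ⟨⟨h1, _⟩, _, h4⟩
      linarith
    have e2 : Set.Icc (1/2:ℝ) 1 ∩ Set.Icc (1 - β₁*(1-u)) (1:ℝ)
        = Set.Icc (1 - β₁*(1-u)) (1:ℝ) :=
      Set.inter_eq_right.mpr (Set.Icc_subset_Icc hb2 le_rfl)
    rw [e1, e2, Real.volume_Icc, measure_empty, ENNReal.toReal_zero]
    have e3 : (1:ℝ) - (1 - β₁*(1-u)) = β₁*(1-u) := by ring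
    rw [e3, ENNReal.toReal_ofReal (mul_nonneg hβ₁0.le (by linarith))]
    field_simp
    ring
  have hY₂A : ∫ x in Set.Ico (0:ℝ) (1/2), Y₂ x ∂volume = u := by
    rw [hY₂def, integral_const_mul,
      integral_add int_j1.integrableOn int_j2.integrableOn,
      aux_ind_integral _ _ hJ₁meas, aux_ind_integral _ _ hJ₂meas]
    have e1 : Set.Ico (0:ℝ) (1/2) ∩ Set.Ico (0:ℝ) (β₂*u) = Set.Ico (0:ℝ) (β₂*u) :=
      Set.inter_eq_right.mpr (Set.Ico_subset_Ico le_rfl hb3)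
    have e2 : Set.Ico (0:ℝ) (1/2) ∩ Set.Icc (1/2:ℝ) (1/2 + β₂*(1-u)) = ∅ := by
      refine Set.eq_empty_iff_forall_notMem.mpr ?_
      rintro x ⟨⟨_, h2⟩, h3, _⟩
      linarith
    rw [e1, e2, Real.volume_Ico, measure_empty, ENNReal.toReal_zero]
    have e3 : β₂*u - 0 = β₂*u := by ring
    rw [e3, ENNReal.toReal_ofReal (mul_nonneg hβ₂0.le hu0.le)]
    field_simp
    ring
  have hY₂B : ∫ x in Set.Icc (1/2:ℝ) 1, Y₂ x ∂volume = 1 - u := by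
    rw [hY₂def, integral_const_mul,
      integral_add int_j1.integrableOn int_j2.integrableOn,
      aux_ind_integral _ _ hJ₁meas, aux_ind_integral _ _ hJ₂meas]
    have e1 : Set.Icc (1/2:ℝ) 1 ∩ Set.Ico (0:ℝ) (β₂*u) = ∅ := by
      refine Set.eq_empty_iff_forall_notMem.mpr ?_
      rintro x ⟨⟨h1, _⟩, _, h4⟩
      linarith
    have e2 : Set.Icc (1/2:ℝ) 1 ∩ Set.Icc (1/2:ℝ) (1/2 + β₂*(1-u))
        = Set.Icc (1/2:ℝ) (1/2 + β₂*(1-u)) :=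
      Set.inter_eq_right.mpr (Set.Icc_subset_Icc le_rfl hb4)
    rw [e1, e2, Real.volume_Icc, measure_empty, ENNReal.toReal_zero]
    have e3 : 1/2 + β₂*(1-u) - 1/2 = β₂*(1-u) := by ring
    rw [e3, ENNReal.toReal_ofReal (mul_nonneg hβ₂0.le (by linarith))]
    field_simp
    ring
  -- the candidate conditional expectation
  set f : ℝ → ℝ := fun ω =>
      if ω ∈ Set.Ico (0 : ℝ) (1 / 2) then 1 - 1 / (2 * (2 * β₁ + β₂))
      else 1 + 1 / (2 * (2 * β₁ + β₂)) with hfdef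
  have hf_eq : f = fun ω => (1 + 1/(2*(2*β₁+β₂))) +
      (Set.Ico (0:ℝ) (1/2)).indicator
        (fun _ => (1 - 1/(2*(2*β₁+β₂))) - (1 + 1/(2*(2*β₁+β₂)))) ω := by
    funext ω
    by_cases h : ω ∈ Set.Ico (0:ℝ) (1/2)
    · simp only [hfdef, if_pos h, Set.indicator_of_mem h]; ring
    · simp only [hfdef, if_neg h, Set.indicator_of_notMem h, add_zero]
  have intf : Integrable f μ := by
    rw [hf_eq]
    exact (integrable_const _).add ((integrable_const _).indicator hAmeas)
  have hfA : ∫ x in Set.Ico (0:ℝ) (1/2), f x ∂volume = u := by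
    have heq : Set.EqOn f (fun _ => 1 - 1/(2*(2*β₁+β₂))) (Set.Ico (0:ℝ) (1/2)) := by
      intro x hx
      simp only [hfdef, if_pos hx]
    rw [setIntegral_congr_fun hAmeas heq]
    rw [setIntegral_const, measureReal_def, Real.volume_Ico, smul_eq_mul]
    have e3 : (1:ℝ)/2 - 0 = 1/2 := by ring
    rw [e3, ENNReal.toReal_ofReal (by norm_num), hp]
    ring
  have hfB : ∫ x in Set.Icc (1/2:ℝ) 1, f x ∂volume = 1 - u := by
    have heq : Set.EqOn f (fun _ => 1 + 1/(2*(2*β₁+β₂))) (Set.Icc (1/2:ℝ) 1) := by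
      intro x hx
      have hxA : x ∉ Set.Ico (0:ℝ) (1/2) := by
        rintro ⟨_, h2⟩
        exact absurd hx.1 (by linarith)
      simp only [hfdef, if_neg hxA]
    rw [setIntegral_congr_fun hBmeas heq]
    rw [setIntegral_const, measureReal_def, Real.volume_Icc, smul_eq_mul]
    have e3 : (1:ℝ) - 1/2 = 1/2 := by ring
    rw [e3, ENNReal.toReal_ofReal (by norm_num), hq]
    ring
  -- decomposition of set integrals for G-measurable sets
  have split : ∀ g : ℝ → ℝ, Integrable g μ → ∀ s : Set ℝ, MeasurableSet[MeasurableSpace.generateFrom {Set.Ico (0:ℝ) (1/2), Set.Icc (1/2:ℝ) 1}] s →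
      ∫ x in s, g x ∂μ = (∫ x in s ∩ Set.Ico (0:ℝ) (1/2), g x ∂volume)
        + (∫ x in s ∩ Set.Icc (1/2:ℝ) 1, g x ∂volume) := by
    intro g hg s hsG
    have hs : MeasurableSet[Real.measurableSpace] s := hGle s hsG
    have hgon : IntegrableOn g (Set.Icc (0:ℝ) 1) volume := by
      rw [hμ] at hg; exact hg
    have hAsub : Set.Ico (0:ℝ) (1/2) ⊆ Set.Icc (0:ℝ) 1 := by
      rw [← hABunion]; exact Set.subset_union_left
    have hBsub : Set.Icc (1/2:ℝ) 1 ⊆ Set.Icc (0:ℝ) 1 := by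
      rw [← hABunion]; exact Set.subset_union_right
    rw [hμ, Measure.restrict_restrict hs, ← hABunion, Set.inter_union_distrib_left]
    exact setIntegral_union (hABdisj.mono Set.inter_subset_right Set.inter_subset_right)
      (hs.inter hBmeas)
      (hgon.mono_set (Set.inter_subset_right.trans hAsub))
      (hgon.mono_set (Set.inter_subset_right.trans hBsub))
  have hpair : ∀ g₁ g₂ : ℝ → ℝ, Integrable g₁ μ → Integrable g₂ μ →
      (∫ x in Set.Ico (0:ℝ) (1/2), g₁ x ∂volume) = (∫ x in Set.Ico (0:ℝ) (1/2), g₂ x ∂volume) →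
      (∫ x in Set.Icc (1/2:ℝ) 1, g₁ x ∂volume) = (∫ x in Set.Icc (1/2:ℝ) 1, g₂ x ∂volume) →
      ∀ s, MeasurableSet[MeasurableSpace.generateFrom {Set.Ico (0:ℝ) (1/2), Set.Icc (1/2:ℝ) 1}] s → ∫ x in s, g₁ x ∂μ = ∫ x in s, g₂ x ∂μ := by
    intro g₁ g₂ h1 h2 hgA hgB s hsG
    rw [split g₁ h1 s hsG, split g₂ h2 s hsG]
    obtain ⟨hdA, hdB⟩ := hdich s hsG
    have eA : (∫ x in s ∩ Set.Ico (0:ℝ) (1/2), g₁ x ∂volume)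
        = ∫ x in s ∩ Set.Ico (0:ℝ) (1/2), g₂ x ∂volume := by
      rcases hdA with h | h
      · rw [Set.disjoint_iff_inter_eq_empty.mp h]; simp
      · rw [Set.inter_eq_right.mpr h]; exact hgA
    have eB : (∫ x in s ∩ Set.Icc (1/2:ℝ) 1, g₁ x ∂volume)
        = ∫ x in s ∩ Set.Icc (1/2:ℝ) 1, g₂ x ∂volume := by
      rcases hdB with h | h
      · rw [Set.disjoint_iff_inter_eq_empty.mp h]; simp
      · rw [Set.inter_eq_right.mpr h]; exact hgB
    rw [eA, eB]
  -- G-measurability of f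
  have hAG : MeasurableSet[MeasurableSpace.generateFrom {Set.Ico (0:ℝ) (1/2), Set.Icc (1/2:ℝ) 1}] (Set.Ico (0:ℝ) (1/2)) :=
    MeasurableSpace.measurableSet_generateFrom (Set.mem_insert _ _)
  have hfGmeas : AEStronglyMeasurable[MeasurableSpace.generateFrom {Set.Ico (0:ℝ) (1/2), Set.Icc (1/2:ℝ) 1}] f μ := by
    rw [hf_eq]
    exact StronglyMeasurable.aestronglyMeasurable
      (StronglyMeasurable.add stronglyMeasurable_const
        (StronglyMeasurable.indicator stronglyMeasurable_const hAG))
  -- conditional expectation identification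
  have h1 : f =ᵐ[μ] μ[Y₁|MeasurableSpace.generateFrom {Set.Ico (0:ℝ) (1/2), Set.Icc (1/2:ℝ) 1}] :=
    ae_eq_condExp_of_forall_setIntegral_eq hGle intY₁
      (fun s _ _ => intf.integrableOn)
      (fun s hs _ => hpair f Y₁ intf intY₁ (hfA.trans hY₁A.symm) (hfB.trans hY₁B.symm) s hs)
      hfGmeas
  have h2 : f =ᵐ[μ] μ[Y₂|MeasurableSpace.generateFrom {Set.Ico (0:ℝ) (1/2), Set.Icc (1/2:ℝ) 1}] :=
    ae_eq_condExp_of_forall_setIntegral_eq hGle intY₂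
      (fun s _ _ => intf.integrableOn)
      (fun s hs _ => hpair f Y₂ intf intY₂ (hfA.trans hY₂A.symm) (hfB.trans hY₂B.symm) s hs)
      hfGmeas
  -- pointwise bounds
  have hY₁0 : ∀ ω, (0:ℝ) ≤ Y₁ ω := by
    intro ω
    simp only [hY₁def]
    exact mul_nonneg (by positivity)
      (add_nonneg (Set.indicator_nonneg (fun _ _ => by norm_num) _)
        (Set.indicator_nonneg (fun _ _ => by norm_num) _))
  have hY₂0 : ∀ ω, (0:ℝ) ≤ Y₂ ω := by
    intro ω
    simp only [hY₂def]
    exact mul_nonneg (by positivity)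
      (add_nonneg (Set.indicator_nonneg (fun _ _ => by norm_num) _)
        (Set.indicator_nonneg (fun _ _ => by norm_num) _))
  have hY₁bd : ∀ ω, Y₁ ω ≤ 1/β₁ := by
    intro ω
    simp only [hY₁def]
    have hle : (Set.Ico (1/2 - β₁*u) (1/2:ℝ)).indicator (fun _ => (1:ℝ)) ω
        + (Set.Icc (1 - β₁*(1-u)) (1:ℝ)).indicator (fun _ => (1:ℝ)) ω ≤ 1 := by
      by_cases h1 : ω ∈ Set.Ico (1/2 - β₁*u) (1/2:ℝ)
      · have h2 : ω ∉ Set.Icc (1 - β₁*(1-u)) (1:ℝ) := by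
          rintro ⟨h3, _⟩
          have := h1.2
          linarith
        rw [Set.indicator_of_mem h1, Set.indicator_of_notMem h2]
        norm_num
      · rw [Set.indicator_of_notMem h1]
        by_cases h2 : ω ∈ Set.Icc (1 - β₁*(1-u)) (1:ℝ)
        · rw [Set.indicator_of_mem h2]; norm_num
        · rw [Set.indicator_of_notMem h2]; norm_num
    calc (1/β₁) * ((Set.Ico (1/2 - β₁*u) (1/2:ℝ)).indicator (fun _ => (1:ℝ)) ω
          + (Set.Icc (1 - β₁*(1-u)) (1:ℝ)).indicator (fun _ => (1:ℝ)) ω)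
        ≤ (1/β₁) * 1 := mul_le_mul_of_nonneg_left hle (by positivity)
      _ = 1/β₁ := mul_one _
  have hY₂bd : ∀ ω, Y₂ ω ≤ 1/β₂ := by
    intro ω
    simp only [hY₂def]
    have hle : (Set.Ico (0:ℝ) (β₂*u)).indicator (fun _ => (1:ℝ)) ω
        + (Set.Icc (1/2:ℝ) (1/2 + β₂*(1-u))).indicator (fun _ => (1:ℝ)) ω ≤ 1 := by
      by_cases h1 : ω ∈ Set.Ico (0:ℝ) (β₂*u)
      · have h2 : ω ∉ Set.Icc (1/2:ℝ) (1/2 + β₂*(1-u)) := by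
          rintro ⟨h3, _⟩
          have := h1.2
          linarith
        rw [Set.indicator_of_mem h1, Set.indicator_of_notMem h2]
        norm_num
      · rw [Set.indicator_of_notMem h1]
        by_cases h2 : ω ∈ Set.Icc (1/2:ℝ) (1/2 + β₂*(1-u))
        · rw [Set.indicator_of_mem h2]; norm_num
        · rw [Set.indicator_of_notMem h2]; norm_num
    calc (1/β₂) * ((Set.Ico (0:ℝ) (β₂*u)).indicator (fun _ => (1:ℝ)) ω
          + (Set.Icc (1/2:ℝ) (1/2 + β₂*(1-u))).indicator (fun _ => (1:ℝ)) ω)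
        ≤ (1/β₂) * 1 := mul_le_mul_of_nonneg_left hle (by positivity)
      _ = 1/β₂ := mul_one _
  -- total integrals
  have htot : ∀ g : ℝ → ℝ, Integrable g volume →
      (∫ x in Set.Ico (0:ℝ) (1/2), g x ∂volume) = u →
      (∫ x in Set.Icc (1/2:ℝ) 1, g x ∂volume) = 1 - u →
      ∫ ω, g ω ∂μ = 1 := by
    intro g hg hgA hgB
    have : ∫ ω, g ω ∂μ = (∫ x in Set.Ico (0:ℝ) (1/2), g x ∂volume)
        + (∫ x in Set.Icc (1/2:ℝ) 1, g x ∂volume) := by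
      rw [hμ, ← hABunion]
      exact setIntegral_union hABdisj hBmeas hg.integrableOn hg.integrableOn
    rw [this, hgA, hgB]
    ring
  refine ⟨⟨ae_of_all _ hY₁0, ae_of_all _ hY₁bd, htot Y₁ intY₁vol hY₁A hY₁B⟩,
    ⟨ae_of_all _ hY₂0, ae_of_all _ hY₂bd, htot Y₂ intY₂vol hY₂A hY₂B⟩,
    h1.symm.trans h2, h1.symm⟩
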